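/- Let f(n, k) denote the number of words in [k]^n avoiding the generalized pattern 21-1, with the convention f(m, k) = 0 for m < 0. Then for all integers n ≥ 1 and k ≥ 1, f(n, k) = ∑_{d=1}^{k} ∑_{j=0}^{d-1} C(d-1, j) ∑_{i=0}^{d-1-j} C(d-1-j, i)·(-1)^i·f(n - 1 - i - j, k - j). -/

import Mathlib

/-- The `i`-th letter (1-based value in `{1,…,k}`) of a word `w ∈ [k]^n`,
with value `0` outside the word. -/
def letter {n k : ℕ} (w : Fin n → Fin k) (i : ℕ) : ℕ :=
  if h : i < n then (w ⟨i, h⟩ : ℕ) + 1 else 0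

/-- `w` avoids the generalized pattern 21-1: there are no 0-based indices
`i, j` with `i + 2 ≤ j < n` such that `w i > w (i+1)` and `w j = w (i+1)`. -/
def Avoids21d1 {n k : ℕ} (w : Fin n → Fin k) : Prop :=
  ∀ i j : ℕ, i + 2 ≤ j → j < n →
    ¬ (letter w (i + 1) < letter w i ∧ letter w j = letter w (i + 1))

instance {n k : ℕ} (w : Fin n → Fin k) : Decidable (Avoids21d1 w) :=
  decidable_of_iff (∀ j < n, ∀ i < j, i + 2 ≤ j →
      ¬ (letter w (i + 1) < letter w i ∧ letter w j = letter w (i + 1)))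
    (by
      constructor
      · intro h i j hij hjn
        exact h j hjn i (by omega) hij
      · intro h j hjn i _ hij
        exact h i j hij hjn)

lemma letter_of_lt {n k : ℕ} (w : Fin n → Fin k) {i : ℕ} (h : i < n) :
    letter w i = (w ⟨i, h⟩ : ℕ) + 1 := dif_pos h

lemma letter_of_ge {n k : ℕ} (w : Fin n → Fin k) {i : ℕ} (h : n ≤ i) :
    letter w i = 0 := dif_neg (by omega)

lemma letter_pos {n k : ℕ} (w : Fin n → Fin k) {i : ℕ} (h : i < n) :
    1 ≤ letter w i := by rw [letter_of_lt w h]; omega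

lemma letter_le {n k : ℕ} (w : Fin n → Fin k) (i : ℕ) :
    letter w i ≤ k := by
  unfold letter
  split
  · exact (w _).isLt
  · omega

def tail {m k : ℕ} (w : Fin (m+1) → Fin k) : Fin m → Fin k := fun i => w i.succ

lemma letter_tail {m k : ℕ} (w : Fin (m+1) → Fin k) (i : ℕ) :
    letter (tail w) i = letter w (i+1) := by
  unfold letter tail
  rcases lt_or_ge i m with h | h
  · rw [dif_pos h, dif_pos (by omega : i + 1 < m + 1)]
    congr 1
  · rw [dif_neg (by omega), dif_neg (by omega)]

def cons' {m k : ℕ} (a : Fin k) (v : Fin m → Fin k) : Fin (m+1) → Fin k :=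
  fun i => if h : (i : ℕ) = 0 then a else v ⟨(i : ℕ) - 1, by omega⟩

lemma tail_cons' {m k : ℕ} (a : Fin k) (v : Fin m → Fin k) : tail (cons' a v) = v := by
  funext i
  simp only [tail, cons', Fin.val_succ]
  rw [dif_neg (Nat.succ_ne_zero _)]
  exact congrArg v (Fin.ext (by simp))

lemma cons'_tail {m k : ℕ} (w : Fin (m+1) → Fin k) : cons' (w 0) (tail w) = w := by
  funext i
  simp only [cons', tail]
  split
  · rename_i h; congr 1; exact (Fin.ext h.symm)
  · rename_i h
    congr 1
    simp [Fin.ext_iff]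
    omega

lemma letter_cons'_zero {m k : ℕ} (a : Fin k) (v : Fin m → Fin k) :
    letter (cons' a v) 0 = (a : ℕ) + 1 := by
  rw [letter_of_lt _ (by omega)]
  simp [cons']

lemma letter_cons'_succ {m k : ℕ} (a : Fin k) (v : Fin m → Fin k) (j : ℕ) :
    letter (cons' a v) (j+1) = letter v j := by
  rw [← letter_tail, tail_cons']

lemma avoids_iff {m k : ℕ} (w : Fin (m+1) → Fin k) :
    Avoids21d1 w ↔ Avoids21d1 (tail w) ∧
      (letter w 1 < letter w 0 → ∀ j, 2 ≤ j → j < m + 1 → letter w j ≠ letter w 1) := by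
  constructor
  · intro h
    refine ⟨?_, ?_⟩
    · intro i j hij hjn
      rw [letter_tail, letter_tail, letter_tail]
      exact h (i+1) (j+1) (by omega) (by omega)
    · intro hdesc j hj2 hjn heq
      exact h 0 j hj2 hjn ⟨hdesc, heq⟩
  · rintro ⟨ht, h0⟩ i j hij hjn ⟨hdesc, heq⟩
    rcases Nat.eq_zero_or_pos i with rfl | hi
    · exact h0 hdesc j hij hjn heq
    · obtain ⟨i', rfl⟩ : ∃ i', i = i' + 1 := ⟨i - 1, by omega⟩
      obtain ⟨j', rfl⟩ : ∃ j', j = j' + 1 := ⟨j - 1, by omega⟩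
      refine ht i' j' (by omega) (by omega) ?_
      rw [letter_tail, letter_tail, letter_tail]
      exact ⟨hdesc, heq⟩

/-- number of avoiding words -/
noncomputable def fN (n k : ℕ) : ℕ := Nat.card {w : Fin n → Fin k // Avoids21d1 w}

/-- number of avoiding words with first letter d -/
noncomputable def Fd (n k d : ℕ) : ℕ :=
  Nat.card {w : Fin n → Fin k // Avoids21d1 w ∧ letter w 0 = d}

/-- number of avoiding words with first letter e, e not recurring -/
noncomputable def Gd (n k e : ℕ) : ℕ :=
  Nat.card {w : Fin n → Fin k // (Avoids21d1 w ∧ letter w 0 = e) ∧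
    ∀ j, 1 ≤ j → j < n → letter w j ≠ e}

lemma card_partition {n k : ℕ} (P : (Fin n → Fin k) → Prop) [DecidablePred P]
    (g : (Fin n → Fin k) → ℕ) (t : Finset ℕ) (hg : ∀ w, P w → g w ∈ t) :
    Nat.card {w // P w} = ∑ b ∈ t, Nat.card {w // P w ∧ g w = b} := by
  classical
  rw [Nat.card_eq_fintype_card, Fintype.card_subtype]
  rw [Finset.card_eq_sum_card_fiberwise (f := g) (t := t)
    (fun w hw => hg w (Finset.mem_filter.mp hw).2)]
  refine Finset.sum_congr rfl fun b _ => ?_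
  rw [Nat.card_eq_fintype_card, Fintype.card_subtype, Finset.filter_filter]

lemma fN_eq_sum (m k : ℕ) : fN (m+1) k = ∑ d ∈ Finset.Icc 1 k, Fd (m+1) k d := by
  classical
  rw [fN, card_partition (fun w => Avoids21d1 w) (fun w => letter w 0) (Finset.Icc 1 k)
    (fun w _ => by
      show letter w 0 ∈ _
      rw [letter_of_lt w (Nat.succ_pos m)]
      exact Finset.mem_Icc.mpr ⟨by omega, by have := (w ⟨0, Nat.succ_pos m⟩).isLt; omega⟩)]
  rfl

lemma fN_zero (k : ℕ) : fN 0 k = 1 := by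
  rw [fN]
  have : ∀ w : Fin 0 → Fin k, Avoids21d1 w := by
    intro w i j hij hj; omega
  rw [Nat.card_eq_fintype_card]
  rw [Fintype.card_eq_one_iff]
  exact ⟨⟨finZeroElim, this _⟩, fun ⟨w, _⟩ => Subtype.ext (funext fun i => i.elim0)⟩

lemma Fd_one (k d : ℕ) (h1 : 1 ≤ d) (h2 : d ≤ k) : Fd 1 k d = 1 := by
  rw [Fd, Nat.card_eq_fintype_card, Fintype.card_eq_one_iff]
  refine ⟨⟨fun _ => ⟨d - 1, by omega⟩, ⟨fun i j hij hj => by omega, ?_⟩⟩, ?_⟩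
  · rw [letter_of_lt _ (by omega : 0 < 1)]
    show d - 1 + 1 = d
    omega
  · rintro ⟨w, hw, hw0⟩
    apply Subtype.ext
    funext i
    have hi : i = ⟨0, by omega⟩ := by ext; omega
    rw [letter_of_lt w (by omega : 0 < 1)] at hw0
    subst hi
    ext
    simp only
    omega

lemma avoids_cons_iff {m k : ℕ} (w : Fin (m+2) → Fin k) :
    Avoids21d1 w ↔ Avoids21d1 (tail w) ∧
      (letter (tail w) 0 < letter w 0 →
        ∀ j, 1 ≤ j → j < m + 1 → letter (tail w) j ≠ letter (tail w) 0) := by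
  rw [avoids_iff]
  constructor
  · rintro ⟨h1, h2⟩
    refine ⟨h1, fun hd j hj1 hj2 => ?_⟩
    rw [letter_tail, letter_tail]
    exact h2 (by rwa [← letter_tail]) (j+1) (by omega) (by omega)
  · rintro ⟨h1, h2⟩
    refine ⟨h1, fun hd j hj1 hj2 => ?_⟩
    obtain ⟨j', rfl⟩ : ∃ j', j = j' + 1 := ⟨j - 1, by omega⟩
    have := h2 (by rwa [letter_tail]) j' (by omega) (by omega)
    rwa [letter_tail, letter_tail] at this

/-- fiber equivalence for second letter e ≥ first letter d -/
noncomputable def equivHi {m k d e : ℕ} (hd : 1 ≤ d) (hdk : d ≤ k) (hde : d ≤ e) :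
    {w : Fin (m+2) → Fin k // (Avoids21d1 w ∧ letter w 0 = d) ∧ letter w 1 = e} ≃
    {v : Fin (m+1) → Fin k // Avoids21d1 v ∧ letter v 0 = e} where
  toFun x := ⟨tail x.val, ((avoids_cons_iff x.val).mp x.2.1.1).1, by
    rw [letter_tail]; exact x.2.2⟩
  invFun y := ⟨cons' ⟨d - 1, by omega⟩ y.val, ⟨⟨by
      rw [avoids_cons_iff, tail_cons']
      refine ⟨y.2.1, fun hlt => ?_⟩
      rw [y.2.2, letter_cons'_zero] at hlt
      exact absurd hlt (by simp only; omega), by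
      rw [letter_cons'_zero]; simp only; omega⟩, by
      exact (letter_cons'_succ (⟨d - 1, by omega⟩ : Fin k) y.val 0).trans y.2.2⟩⟩
  left_inv x := by
    apply Subtype.ext
    have h0 := x.2.1.2
    have hw0 : x.val 0 = ⟨d - 1, by omega⟩ := by
      rw [letter_of_lt x.val (by omega : 0 < m + 2)] at h0
      ext
      simp only
      have : x.val ⟨0, by omega⟩ = x.val 0 := by congr 1
      rw [this] at h0
      omega
    show cons' _ (tail x.val) = x.val
    rw [← hw0]
    exact cons'_tail x.val
  right_inv y := Subtype.ext (tail_cons' ⟨d - 1, by omega⟩ y.val)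

/-- fiber equivalence for second letter e < first letter d -/
noncomputable def equivLo {m k d e : ℕ} (hd : 1 ≤ d) (hdk : d ≤ k) (he : 1 ≤ e) (hde : e < d) :
    {w : Fin (m+2) → Fin k // (Avoids21d1 w ∧ letter w 0 = d) ∧ letter w 1 = e} ≃
    {v : Fin (m+1) → Fin k // (Avoids21d1 v ∧ letter v 0 = e) ∧
      ∀ j, 1 ≤ j → j < m + 1 → letter v j ≠ e} where
  toFun x := ⟨tail x.val, ⟨((avoids_cons_iff x.val).mp x.2.1.1).1, by
      rw [letter_tail]; exact x.2.2⟩, by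
      intro j hj1 hj2
      have h1' : letter (tail x.val) 0 = e := by rw [letter_tail]; exact x.2.2
      have := ((avoids_cons_iff x.val).mp x.2.1.1).2
        (by rw [h1', x.2.1.2]; omega) j hj1 hj2
      rwa [h1'] at this⟩
  invFun y := ⟨cons' ⟨d - 1, by omega⟩ y.val, ⟨⟨by
      rw [avoids_cons_iff, tail_cons']
      refine ⟨y.2.1.1, fun _ j hj1 hj2 => ?_⟩
      rw [y.2.1.2]
      exact y.2.2 j hj1 hj2, by
      rw [letter_cons'_zero]; simp only; omega⟩, by
      exact (letter_cons'_succ (⟨d - 1, by omega⟩ : Fin k) y.val 0).trans y.2.1.2⟩⟩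
  left_inv x := by
    apply Subtype.ext
    have h0 := x.2.1.2
    have hw0 : x.val 0 = ⟨d - 1, by omega⟩ := by
      rw [letter_of_lt x.val (by omega : 0 < m + 2)] at h0
      ext
      simp only
      have : x.val ⟨0, by omega⟩ = x.val 0 := by congr 1
      rw [this] at h0
      omega
    show cons' _ (tail x.val) = x.val
    rw [← hw0]
    exact cons'_tail x.val
  right_inv y := Subtype.ext (tail_cons' ⟨d - 1, by omega⟩ y.val)

lemma Fd_rec (m k d : ℕ) (h1 : 1 ≤ d) (h2 : d ≤ k) :
    Fd (m+2) k d = (∑ e ∈ Finset.Icc d k, Fd (m+1) k e)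
      + ∑ e ∈ Finset.Icc 1 (d-1), Gd (m+1) k e := by
  classical
  rw [Fd, card_partition (fun w => Avoids21d1 w ∧ letter w 0 = d) (fun w => letter w 1)
    (Finset.Icc 1 k)
    (fun w _ => by
      show letter w 1 ∈ _
      rw [letter_of_lt w (by omega : 1 < m + 2)]
      exact Finset.mem_Icc.mpr ⟨by omega, by have := (w ⟨1, by omega⟩).isLt; omega⟩)]
  have hsplit : Finset.Icc 1 k = Finset.Icc 1 (d-1) ∪ Finset.Icc d k := by
    rw [Finset.union_comm]
    ext x
    simp only [Finset.mem_Icc, Finset.mem_union]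
    omega
  have hdisj : Disjoint (Finset.Icc 1 (d-1)) (Finset.Icc d k) := by
    rw [Finset.disjoint_left]
    intro x hx hx'
    simp only [Finset.mem_Icc] at hx hx'
    omega
  rw [hsplit, Finset.sum_union hdisj, add_comm]
  congr 1
  · refine Finset.sum_congr rfl fun e he => ?_
    simp only [Finset.mem_Icc] at he
    exact Nat.card_congr (equivHi h1 h2 he.1)
  · refine Finset.sum_congr rfl fun e he => ?_
    simp only [Finset.mem_Icc] at he
    exact Nat.card_congr (equivLo h1 h2 he.1 (by omega))

def phi (e x : ℕ) : ℕ := if x < e then x else x - 1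
def phiInv (e x : ℕ) : ℕ := if x < e then x else x + 1

lemma phi_lt_iff {e x : ℕ} (he : 1 ≤ e) (hx : x ≠ e) : phi e x < e ↔ x < e := by
  unfold phi; split <;> omega

lemma phi_lt_phi_iff {e x y : ℕ} (hx : x ≠ e) (hy : y ≠ e) :
    phi e x < phi e y ↔ x < y := by
  unfold phi; split <;> split <;> omega

lemma phi_eq_phi_iff {e x y : ℕ} (hx : x ≠ e) (hy : y ≠ e) :
    phi e x = phi e y ↔ x = y := by
  unfold phi; split <;> split <;> omega

lemma phiInv_lt_iff {e x : ℕ} : phiInv e x < e ↔ x < e := by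
  unfold phiInv; split <;> omega

lemma phiInv_lt_phiInv_iff {e x y : ℕ} : phiInv e x < phiInv e y ↔ x < y := by
  unfold phiInv; split <;> split <;> omega

lemma phiInv_eq_phiInv_iff {e x y : ℕ} : phiInv e x = phiInv e y ↔ x = y := by
  unfold phiInv; split <;> split <;> omega

lemma phiInv_ne {e x : ℕ} : phiInv e x ≠ e := by unfold phiInv; split <;> omega

lemma phiInv_phi {e x : ℕ} (hx : x ≠ e) : phiInv e (phi e x) = x := by
  unfold phi phiInv
  split <;> (first | omega | (split <;> omega))

lemma phi_phiInv {e x : ℕ} : phi e (phiInv e x) = x := by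
  unfold phi phiInv
  split <;> (first | omega | (split <;> omega))

lemma avoids_congr {n k k' : ℕ} (w : Fin n → Fin k) (w' : Fin n → Fin k')
    (h0 : ∀ b, 1 ≤ b → (letter w' b < letter w' 0 ↔ letter w b < letter w 0))
    (h1 : ∀ a b, 1 ≤ a → 1 ≤ b → (letter w' a < letter w' b ↔ letter w a < letter w b))
    (h2 : ∀ a b, 1 ≤ a → 1 ≤ b → (letter w' a = letter w' b ↔ letter w a = letter w b)) :
    Avoids21d1 w ↔ Avoids21d1 w' := by
  constructor
  · intro h i j hij hjn ⟨hd, he⟩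
    rcases Nat.eq_zero_or_pos i with rfl | hi
    · exact h 0 j hij hjn ⟨(h0 1 le_rfl).mp hd, (h2 j 1 (by omega) le_rfl).mp he⟩
    · exact h i j hij hjn ⟨(h1 (i+1) i (by omega) hi).mp hd,
        (h2 j (i+1) (by omega) (by omega)).mp he⟩
  · intro h i j hij hjn ⟨hd, he⟩
    rcases Nat.eq_zero_or_pos i with rfl | hi
    · exact h 0 j hij hjn ⟨(h0 1 le_rfl).mpr hd, (h2 j 1 (by omega) le_rfl).mpr he⟩
    · exact h i j hij hjn ⟨(h1 (i+1) i (by omega) hi).mpr hd,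
        (h2 j (i+1) (by omega) (by omega)).mpr he⟩

def delW {m k : ℕ} (e : ℕ) (hk : 1 ≤ k - 1) (w : Fin (m+1) → Fin k) :
    Fin (m+1) → Fin (k-1) :=
  fun i => ⟨(if (i : ℕ) = 0 then e - 1 else phi e (letter w i) - 1) % (k-1),
    Nat.mod_lt _ (by omega)⟩

def insW {m k : ℕ} (e : ℕ) (hk : 1 ≤ k) (v : Fin (m+1) → Fin (k-1)) :
    Fin (m+1) → Fin k :=
  fun i => ⟨(if (i : ℕ) = 0 then e - 1 else phiInv e (letter v i) - 1) % k,
    Nat.mod_lt _ (by omega)⟩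

lemma letter_delW_zero {m k e : ℕ} (hk : 1 ≤ k - 1) (he : 1 ≤ e) (hek : e < k)
    (w : Fin (m+1) → Fin k) : letter (delW e hk w) 0 = e := by
  rw [letter_of_lt _ (Nat.succ_pos m)]
  show (if (0:ℕ) = 0 then e - 1 else _) % (k-1) + 1 = e
  rw [if_pos rfl, Nat.mod_eq_of_lt (by omega)]
  omega

lemma letter_delW {m k e : ℕ} (hk : 1 ≤ k - 1) (he : 1 ≤ e) (hek : e < k)
    (w : Fin (m+1) → Fin k) {b : ℕ} (hb : 1 ≤ b) (hbne : letter w b ≠ e) :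
    letter (delW e hk w) b = phi e (letter w b) := by
  rcases lt_or_ge b (m+1) with hbm | hbm
  · have hle : 1 ≤ letter w b := letter_pos w hbm
    have hle2 : letter w b ≤ k := letter_le w b
    rw [letter_of_lt _ hbm]
    show (if (b:ℕ) = 0 then e - 1 else phi e (letter w b) - 1) % (k-1) + 1 = _
    rw [if_neg (by omega)]
    rw [Nat.mod_eq_of_lt (by unfold phi; split <;> omega)]
    unfold phi; split <;> omega
  · rw [letter_of_ge _ hbm, letter_of_ge w hbm]
    unfold phi
    rw [if_pos (by omega)]

lemma letter_insW_zero {m k e : ℕ} (hk : 1 ≤ k) (he : 1 ≤ e) (hek : e ≤ k)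
    (v : Fin (m+1) → Fin (k-1)) : letter (insW e hk v) 0 = e := by
  rw [letter_of_lt _ (Nat.succ_pos m)]
  show (if (0:ℕ) = 0 then e - 1 else _) % k + 1 = e
  rw [if_pos rfl, Nat.mod_eq_of_lt (by omega)]
  omega

lemma letter_insW {m k e : ℕ} (hk : 1 ≤ k) (he : 1 ≤ e)
    (v : Fin (m+1) → Fin (k-1)) {b : ℕ} (hb : 1 ≤ b) :
    letter (insW e hk v) b = phiInv e (letter v b) := by
  rcases lt_or_ge b (m+1) with hbm | hbm
  · have hle : 1 ≤ letter v b := letter_pos v hbm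
    have hle2 : letter v b ≤ k - 1 := letter_le v b
    rw [letter_of_lt _ hbm]
    show (if (b:ℕ) = 0 then e - 1 else phiInv e (letter v b) - 1) % k + 1 = _
    rw [if_neg (by omega)]
    rw [Nat.mod_eq_of_lt (by unfold phiInv; split <;> omega)]
    unfold phiInv; split <;> omega
  · rw [letter_of_ge _ hbm, letter_of_ge v hbm]
    unfold phiInv
    rw [if_pos (by omega)]

lemma eq_of_letter {n k : ℕ} (w w' : Fin n → Fin k)
    (h : ∀ b, b < n → letter w b = letter w' b) : w = w' := by
  funext i
  have := h i i.isLt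
  rw [letter_of_lt w i.isLt, letter_of_lt w' i.isLt] at this
  simp only [Fin.eta] at this
  ext
  omega

noncomputable def equivDel {m k e : ℕ} (he : 1 ≤ e) (hek : e < k) :
    {w : Fin (m+1) → Fin k // (Avoids21d1 w ∧ letter w 0 = e) ∧
      ∀ j, 1 ≤ j → j < m + 1 → letter w j ≠ e} ≃
    {v : Fin (m+1) → Fin (k-1) // Avoids21d1 v ∧ letter v 0 = e} where
  toFun x := ⟨delW e (by omega) x.val, by
    have hne : ∀ b, 1 ≤ b → letter x.val b ≠ e := fun b hb => by
      rcases lt_or_ge b (m+1) with h | h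
      · exact x.2.2 b hb h
      · rw [letter_of_ge _ h]; omega
    refine ⟨?_, letter_delW_zero (by omega) he hek x.val⟩
    rw [← avoids_congr x.val (delW e (by omega) x.val)
      (fun b hb => by
        rw [letter_delW (by omega) he hek x.val hb (hne b hb),
          letter_delW_zero (by omega) he hek, x.2.1.2]
        exact phi_lt_iff he (hne b hb))
      (fun a b ha hb => by
        rw [letter_delW (by omega) he hek x.val ha (hne a ha),
          letter_delW (by omega) he hek x.val hb (hne b hb)]
        exact phi_lt_phi_iff (hne a ha) (hne b hb))
      (fun a b ha hb => by
        rw [letter_delW (by omega) he hek x.val ha (hne a ha),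
          letter_delW (by omega) he hek x.val hb (hne b hb)]
        exact phi_eq_phi_iff (hne a ha) (hne b hb))]
    exact x.2.1.1⟩
  invFun y := ⟨insW e (by omega) y.val, ⟨⟨by
      rw [avoids_congr (insW e (by omega) y.val) y.val
        (fun b hb => by
          rw [letter_insW (by omega) he y.val hb,
            letter_insW_zero (by omega) he (by omega), y.2.2]
          exact phiInv_lt_iff.symm)
        (fun a b ha hb => by
          rw [letter_insW (by omega) he y.val ha, letter_insW (by omega) he y.val hb]
          exact phiInv_lt_phiInv_iff.symm)
        (fun a b ha hb => by
          rw [letter_insW (by omega) he y.val ha, letter_insW (by omega) he y.val hb]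
          exact phiInv_eq_phiInv_iff.symm)]
      exact y.2.1,
      letter_insW_zero (by omega) he (by omega) y.val⟩, by
      intro j hj hj2
      rw [letter_insW (by omega) he y.val hj]
      exact phiInv_ne⟩⟩
  left_inv x := by
    apply Subtype.ext
    apply eq_of_letter
    intro b hb
    have hne : ∀ b, 1 ≤ b → letter x.val b ≠ e := fun b hb => by
      rcases lt_or_ge b (m+1) with h | h
      · exact x.2.2 b hb h
      · rw [letter_of_ge _ h]; omega
    rcases Nat.eq_zero_or_pos b with rfl | hb1
    · rw [letter_insW_zero (by omega) he (by omega), x.2.1.2]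
    · rw [letter_insW (by omega) he _ hb1,
        letter_delW (by omega) he hek x.val hb1 (hne b hb1), phiInv_phi (hne b hb1)]
  right_inv y := by
    apply Subtype.ext
    apply eq_of_letter
    intro b hb
    rcases Nat.eq_zero_or_pos b with rfl | hb1
    · rw [letter_delW_zero (by omega) he hek, y.2.2]
    · rw [letter_delW (by omega) he hek _ hb1 (by
        rw [letter_insW (by omega) he y.val hb1]; exact phiInv_ne),
        letter_insW (by omega) he y.val hb1, phi_phiInv]

lemma Gd_eq (m k e : ℕ) (he : 1 ≤ e) (hek : e < k) :
    Gd (m+1) k e = Fd (m+1) (k-1) e :=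
  Nat.card_congr (equivDel he hek)

abbrev Phi' := ℤ → ℤ → ℤ

def Nop : Module.End ℤ Phi' where
  toFun ψ := fun n k => ψ (n - 1) k
  map_add' _ _ := rfl
  map_smul' _ _ := rfl

def Kop : Module.End ℤ Phi' where
  toFun ψ := fun n k => ψ n (k - 1)
  map_add' _ _ := rfl
  map_smul' _ _ := rfl

lemma hNK : Commute Nop Kop := LinearMap.ext fun ψ => rfl

lemma Nop_pow_apply (a : ℕ) (ψ : Phi') (n k : ℤ) :
    ((Nop ^ a) ψ) n k = ψ (n - a) k := by
  induction a generalizing n with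
  | zero => simp
  | succ a ih =>
    rw [pow_succ', Module.End.mul_apply]
    show ((Nop ^ a) ψ) (n - 1) k = _
    rw [ih]
    congr 1
    push_cast
    ring

lemma Kop_pow_apply (b : ℕ) (ψ : Phi') (n k : ℤ) :
    ((Kop ^ b) ψ) n k = ψ n (k - b) := by
  induction b generalizing k with
  | zero => simp
  | succ b ih =>
    rw [pow_succ', Module.End.mul_apply]
    show ((Kop ^ b) ψ) n (k - 1) = _
    rw [ih]
    congr 1
    push_cast
    ring

lemma natCast_apply' (c : ℕ) (χ : Phi') (n k : ℤ) :
    (((c : ℕ) : Module.End ℤ Phi') χ) n k = (c : ℤ) * χ n k := by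
  have h : ((c : ℕ) : Module.End ℤ Phi') = c • (1 : Module.End ℤ Phi') := by
    rw [nsmul_eq_mul, mul_one]
  rw [h]
  show c • (χ n k) = _
  rw [nsmul_eq_mul]

lemma negNop_pow_apply (i : ℕ) (χ : Phi') (n k : ℤ) :
    (((-Nop) ^ i) χ) n k = (-1)^i * χ (n - i) k := by
  induction i generalizing n with
  | zero => simp
  | succ i ih =>
    rw [pow_succ', Module.End.mul_apply]
    show -((((-Nop) ^ i) χ) (n - 1) k) = _
    rw [ih]
    have harg : n - 1 - (i:ℤ) = n - ((i+1 : ℕ) : ℤ) := by push_cast; ring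
    rw [harg]
    ring

lemma NKpow_apply (j : ℕ) (χ : Phi') (n k : ℤ) :
    (((Nop * Kop) ^ j) χ) n k = χ (n - j) (k - j) := by
  rw [hNK.mul_pow, Module.End.mul_apply, Nop_pow_apply, Kop_pow_apply]

lemma subNop_pow_apply (r : ℕ) (χ : Phi') (n k : ℤ) :
    (((1 - Nop) ^ r) χ) n k =
      ∑ i ∈ Finset.range (r+1), ((r.choose i : ℤ) * (-1)^i) * χ (n - i) k := by
  rw [sub_eq_neg_add, (Commute.one_right (-Nop)).add_pow]
  rw [LinearMap.sum_apply, Finset.sum_apply, Finset.sum_apply]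
  refine Finset.sum_congr rfl fun i _ => ?_
  rw [one_pow, mul_one, Module.End.mul_apply, negNop_pow_apply, natCast_apply']
  ring

/-- the main operator -/
def Mop : Module.End ℤ Phi' := Nop * Kop + (1 - Nop)

lemma Mop_apply (ψ : Phi') (n k : ℤ) :
    (Mop ψ) n k = ψ n k - ψ (n-1) k + ψ (n-1) (k-1) := by
  show (Nop * Kop) ψ n k + ((1 - Nop) ψ) n k = _
  rw [Module.End.mul_apply, LinearMap.sub_apply]
  show ψ (n-1) (k-1) + (((1 : Module.End ℤ Phi') ψ) n k - ψ (n-1) k) = _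
  rw [Module.End.one_apply]
  ring

def S (ψ : Phi') (m : ℕ) (n k : ℤ) : ℤ :=
  ∑ j ∈ Finset.range (m+1), (m.choose j : ℤ) *
    ∑ i ∈ Finset.range (m - j + 1), ((m - j).choose i : ℤ) * (-1)^i * ψ (n - i - j) (k - j)

lemma Mop_pow_apply (ψ : Phi') (m : ℕ) (n k : ℤ) :
    ((Mop ^ m) ψ) n k = S ψ m n k := by
  have hA : Commute (Nop * Kop) (1 - Nop) :=
    Commute.sub_right (Commute.one_right _) (Commute.mul_left (Commute.refl Nop) hNK.symm)
  rw [Mop, hA.add_pow, LinearMap.sum_apply, Finset.sum_apply, Finset.sum_apply, S]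
  refine Finset.sum_congr rfl fun j hj => ?_
  rw [← (Nat.cast_commute (m.choose j) ((Nop * Kop) ^ j * (1 - Nop) ^ (m - j))).eq]
  rw [Module.End.mul_apply, natCast_apply', Module.End.mul_apply, NKpow_apply, subNop_pow_apply]
  congr 1
  refine Finset.sum_congr rfl fun i _ => ?_
  have harg : n - j - i = n - i - j := by ring
  rw [harg, mul_assoc]

lemma S_rec (ψ : Phi') (m : ℕ) (n k : ℤ) :
    S ψ (m+1) n k = S ψ m n k - S ψ m (n-1) k + S ψ m (n-1) (k-1) := by
  rw [← Mop_pow_apply, ← Mop_pow_apply, ← Mop_pow_apply, ← Mop_pow_apply,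
    pow_succ', Module.End.mul_apply, Mop_apply]

/-- The number of words in `[k]^m` avoiding 21-1, as an integer,
with the convention that it is `0` for `m < 0`. -/
noncomputable def f (m : ℤ) (k : ℕ) : ℤ :=
  if m < 0 then 0
  else (Nat.card {w : Fin m.toNat → Fin k // Avoids21d1 w} : ℤ)

lemma f_eq (n k : ℕ) : f (n : ℤ) k = (fN n k : ℤ) := by
  rw [f, if_neg (by omega)]
  have h : ((n : ℤ)).toNat = n := Int.toNat_natCast n
  congr 1

lemma f_neg {m : ℤ} (h : m < 0) (k : ℕ) : f m k = 0 := if_pos h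

lemma f_zero (c : ℕ) : f 0 c = 1 := by
  have := f_eq 0 c
  norm_num at this
  rw [this, fN_zero]
  norm_num

noncomputable def fZ : Phi' := fun n k => f n k.toNat

lemma fZ_def (n k : ℤ) : fZ n k = f n k.toNat := rfl

lemma S_zero (ψ : Phi') (n k : ℤ) : S ψ 0 n k = ψ n k := by
  simp [S]

lemma S_base (r : ℕ) (k : ℤ) : S fZ r 0 k = 1 := by
  rw [S, Finset.sum_eq_single 0]
  · rw [Finset.sum_eq_single 0]
    · norm_num
      show f _ _ = 1
      norm_num
      exact f_zero _
    · intro i _ hi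
      have : fZ (0 - (i:ℤ) - (0:ℕ)) (k - (0:ℕ)) = 0 := by
        show f _ _ = 0
        exact f_neg (by push_cast; omega) _
      rw [this, mul_zero]
    · intro h
      simp at h
  · intro j _ hj
    have hz : ∀ i ∈ Finset.range (r - j + 1),
        ((r-j).choose i : ℤ) * (-1)^i * fZ (0 - (i:ℤ) - (j:ℤ)) (k - (j:ℤ)) = 0 := by
      intro i _
      have : fZ (0 - (i:ℤ) - (j:ℤ)) (k - (j:ℤ)) = 0 := by
        show f _ _ = 0
        exact f_neg (by push_cast; omega) _
      rw [this, mul_zero]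
    rw [Finset.sum_eq_zero hz, mul_zero]
  · intro h
    simp at h

lemma Fd_step (n' k d : ℕ) (hd : 1 ≤ d) (hdk : d + 1 ≤ k) :
    (Fd (n'+2) k (d+1) : ℤ) = (Fd (n'+2) k d : ℤ)
      - (Fd (n'+1) k d : ℤ) + (Fd (n'+1) (k-1) d : ℤ) := by
  have h1 := Fd_rec n' k d hd (by omega)
  have h2 := Fd_rec n' k (d+1) (by omega) hdk
  have hG := Gd_eq n' k d hd (by omega)
  have hIccd : Finset.Icc d k = insert d (Finset.Icc (d+1) k) := by
    ext x
    simp only [Finset.mem_insert, Finset.mem_Icc]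
    omega
  have hIcc2 : Finset.Icc 1 ((d+1)-1) = insert d (Finset.Icc 1 (d-1)) := by
    ext x
    simp only [Finset.mem_insert, Finset.mem_Icc]
    omega
  rw [hIccd, Finset.sum_insert (by simp)] at h1
  rw [hIcc2, Finset.sum_insert (by simp; omega)] at h2
  omega

lemma FdS (m : ℕ) : ∀ n k : ℕ, 1 ≤ n → m + 1 ≤ k →
    (Fd n k (m+1) : ℤ) = S fZ m ((n:ℤ) - 1) (k:ℤ) := by
  induction m with
  | zero =>
    intro n k hn hk
    rw [S_zero]
    obtain ⟨n'', rfl⟩ : ∃ t, n = t + 1 := ⟨n - 1, by omega⟩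
    have hcast : ((n''+1 : ℕ) : ℤ) - 1 = ((n'' : ℕ) : ℤ) := by push_cast; ring
    rw [hcast, fZ_def, Int.toNat_natCast, f_eq]
    norm_cast
    rcases n'' with _ | n'
    · rw [Fd_one k 1 le_rfl hk, fN_zero]
    · rw [Fd_rec n' k 1 le_rfl hk, Finset.Icc_eq_empty (show ¬(1:ℕ) ≤ 1-1 by omega), Finset.sum_empty,
        add_zero, ← fN_eq_sum]
  | succ m ih =>
    intro n k hn hk
    obtain ⟨n'', rfl⟩ : ∃ t, n = t + 1 := ⟨n - 1, by omega⟩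
    rcases n'' with _ | n'
    · rw [Fd_one k (m+2) (by omega) hk]
      have harg : ((0+1 : ℕ) : ℤ) - 1 = (0:ℤ) := by norm_num
      rw [harg, S_base]
      exact Nat.cast_one
    · rw [Fd_step n' k (m+1) (by omega) (by omega)]
      rw [ih (n'+2) k (by omega) (by omega), ih (n'+1) k (by omega) (by omega),
        ih (n'+1) (k-1) (by omega) (by omega)]
      rw [S_rec]
      have hk1 : 1 ≤ k := by omega
      push_cast [Nat.cast_sub hk1]
      ring_nf

theorem stmt8 (n k : ℕ) (hn : 1 ≤ n) (hk : 1 ≤ k) :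
    f (n : ℤ) k = ∑ d ∈ Finset.Icc 1 k, ∑ j ∈ Finset.range d,
      ((d - 1).choose j : ℤ) * ∑ i ∈ Finset.range (d - j),
        ((d - 1 - j).choose i : ℤ) * (-1) ^ i * f ((n : ℤ) - 1 - i - j) (k - j) := by
  obtain ⟨n', rfl⟩ : ∃ n', n = n' + 1 := ⟨n - 1, by omega⟩
  rw [f_eq, fN_eq_sum, Nat.cast_sum]
  refine Finset.sum_congr rfl fun d hd => ?_
  simp only [Finset.mem_Icc] at hd
  have hd1 : d - 1 + 1 = d := by omega
  have h := FdS (d-1) (n'+1) k (by omega) (by omega)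
  rw [hd1] at h
  rw [h, S, hd1]
  refine Finset.sum_congr rfl fun j hj => ?_
  simp only [Finset.mem_range] at hj
  congr 1
  rw [show d - 1 - j + 1 = d - j by omega]
  refine Finset.sum_congr rfl fun i hi => ?_
  congr 1
  show f _ (((k:ℤ) - (j:ℤ)).toNat) = f _ (k - j)
  congr 1
  omega
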